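/- Assume condition (K1): for every Λ ∈ B₀(X), ∫_Γ ∑_{x∈γ} ∫_X c(x,y,γ\{x})·(χ_Λ(x) + χ_Λ(y)) ν(dy) μ(dγ) < ∞. Then for all cylinder functions F, G ∈ FC_b the Kawasaki form integral is absolutely convergent: ∫_Γ ∑_{x∈γ} ∫_X c(x,y,γ\{x}) |(D_{xy}^{-+} F)(γ)|·|(D_{xy}^{-+} G)(γ)| ν(dy) μ(dγ) < ∞. -/

import Mathlib

open MeasureTheory Set ENNReal Filter Topology

noncomputable section

/-- The configuration space over `X`: the set of all locally finite subsets of `X`. -/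
def Config (X : Type*) [TopologicalSpace X] : Type _ :=
  {γ : Set X // ∀ K : Set X, IsCompact K → (γ ∩ K).Finite}

namespace Config

variable {X : Type*} [TopologicalSpace X]

/-- Removal of a point from a configuration, `γ \ {x}`. -/
def erase (γ : Config X) (x : X) : Config X :=
  ⟨γ.1 \ {x}, fun K hK => (γ.2 K hK).subset fun _ hz => ⟨hz.1.1, hz.2⟩⟩

/-- Insertion of a point into a configuration, `γ ∪ {x}`. -/
def ins (γ : Config X) (x : X) : Config X :=
  ⟨insert x γ.1, fun K hK => ((γ.2 K hK).insert x).subset (by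
    rintro z ⟨hz1, hz2⟩
    rcases Set.mem_insert_iff.mp hz1 with rfl | h
    · exact Set.mem_insert _ _
    · exact Set.mem_insert_of_mem _ ⟨h, hz2⟩)⟩

end Config

variable {X : Type*} [TopologicalSpace X]

/-- Cylinder functions `FC_b`: `F(γ) = g(⟨φ₁,γ⟩, …, ⟨φ_N,γ⟩)` with the `φᵢ` continuous
with compact support and `g` bounded continuous; here `⟨φ,γ⟩ = ∑_{x∈γ} φ(x)`. -/
def IsCylinder (F : Config X → ℝ) : Prop :=
  ∃ (N : ℕ) (φ : Fin N → X → ℝ) (g : (Fin N → ℝ) → ℝ),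
    (∀ i, Continuous (φ i)) ∧ (∀ i, HasCompactSupport (φ i)) ∧
      Continuous g ∧ (∃ C : ℝ, ∀ v, |g v| ≤ C) ∧
      ∀ γ : Config X, F γ = g fun i => ∑' x : γ.1, φ i x

/-- `(D_x^- F)(γ) = F(γ \ {x}) - F(γ)`. -/
def Dm (F : Config X → ℝ) (x : X) (γ : Config X) : ℝ := F (γ.erase x) - F γ

/-- `(D_x^+ F)(γ) = F(γ ∪ {x}) - F(γ)`. -/
def Dp (F : Config X → ℝ) (x : X) (γ : Config X) : ℝ := F (γ.ins x) - F γ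

/-- `(D_{xy}^{-+} F)(γ) = F((γ \ {x}) ∪ {y}) - F(γ)`. -/
def Dpm (F : Config X → ℝ) (x y : X) (γ : Config X) : ℝ := F ((γ.erase x).ins y) - F γ

variable [MeasurableSpace X]

/-- `Λ ∈ B₀(X)`: a relatively compact Borel set. -/
def IsB0 (Λ : Set X) : Prop := MeasurableSet Λ ∧ IsCompact (closure Λ)

/-- The σ-algebra on `Config X` generated by the counting maps `γ ↦ |γ ∩ Λ|`, `Λ ∈ B₀(X)`. -/
instance : MeasurableSpace (Config X) :=
  ⨆ (Λ : Set X) (_ : IsB0 Λ),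
    MeasurableSpace.comap (fun γ : Config X => (γ.1 ∩ Λ).ncard) ⊤

/-- The Mecke identity: `r` is a Papangelou intensity for `μ`, i.e.
`∫ ∑_{x∈γ} H(x,γ) μ(dγ) = ∫ ∫ r(x,γ) H(x,γ∪{x}) ν(dx) μ(dγ)` for measurable `H ≥ 0`. -/
def MeckeIdentity (ν : Measure X) (μ : Measure (Config X)) (r : X → Config X → ℝ) : Prop :=
  ∀ H : X → Config X → ℝ≥0∞, Measurable (fun p : X × Config X => H p.1 p.2) →
    ∫⁻ γ, ∑' x : γ.1, H (x : X) γ ∂μ =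
      ∫⁻ γ, ∫⁻ x, ENNReal.ofReal (r x γ) * H x (γ.ins x) ∂ν ∂μ

/-- Condition (G1): `∫ ∑_{x∈γ∩Λ} d(x,γ\{x}) μ(dγ) < ∞` for every `Λ ∈ B₀(X)`. -/
def CondG1 (μ : Measure (Config X)) (d : X → Config X → ℝ) : Prop :=
  ∀ Λ : Set X, IsB0 Λ →
    ∫⁻ γ, ∑' x : ↥(γ.1 ∩ Λ), ENNReal.ofReal (d (x : X) (γ.erase (x : X))) ∂μ < ⊤

/-- Condition (K1): `∫ ∑_{x∈γ} ∫ c(x,y,γ\{x})(χ_Λ(x)+χ_Λ(y)) ν(dy) μ(dγ) < ∞`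
for every `Λ ∈ B₀(X)`. -/
def CondK1 (ν : Measure X) (μ : Measure (Config X)) (c : X → X → Config X → ℝ) : Prop :=
  ∀ Λ : Set X, IsB0 Λ →
    ∫⁻ γ, ∑' x : γ.1, ∫⁻ y,
        ENNReal.ofReal (c (x : X) y (γ.erase (x : X))) *
          (Λ.indicator (1 : X → ℝ≥0∞) (x : X) + Λ.indicator (1 : X → ℝ≥0∞) y) ∂ν ∂μ < ⊤

/-- The Glauber Dirichlet form `ℰ_G(F,G)`. -/
def glauberE (μ : Measure (Config X)) (d : X → Config X → ℝ) (F G : Config X → ℝ) : ℝ :=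
  ∫ γ, (∑' x : γ.1, d (x : X) (γ.erase (x : X)) * Dm F (x : X) γ * Dm G (x : X) γ) ∂μ

/-- The Kawasaki Dirichlet form `ℰ_K(F,G)`. -/
def kawasakiE (ν : Measure X) (μ : Measure (Config X)) (c : X → X → Config X → ℝ)
    (F G : Config X → ℝ) : ℝ :=
  ∫ γ, (∑' x : γ.1, ∫ y, c (x : X) y (γ.erase (x : X)) * Dpm F (x : X) y γ *
    Dpm G (x : X) y γ ∂ν) ∂μ

lemma Dpm_eq_zero_of_rep {F : Config X → ℝ} {N : ℕ} {φ : Fin N → X → ℝ}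
    {g : (Fin N → ℝ) → ℝ}
    (hrep : ∀ γ : Config X, F γ = g fun i => ∑' x : γ.1, φ i x)
    {x y : X} (hx : ∀ i, φ i x = 0) (hy : ∀ i, φ i y = 0) (γ : Config X) :
    Dpm F x y γ = 0 := by
  unfold Dpm
  rw [hrep, hrep, sub_eq_zero]
  congr 1
  funext i
  rw [tsum_subtype, tsum_subtype]
  congr 1
  funext z
  by_cases hzx : z = x
  · subst hzx
    rw [Set.indicator_apply_eq_zero.mpr fun _ => hx i,
      Set.indicator_apply_eq_zero.mpr fun _ => hx i]
  by_cases hzy : z = y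
  · subst hzy
    rw [Set.indicator_apply_eq_zero.mpr fun _ => hy i,
      Set.indicator_apply_eq_zero.mpr fun _ => hy i]
  · have hmem : z ∈ ((γ.erase x).ins y).1 ↔ z ∈ γ.1 := by
      simp [Config.ins, Config.erase, hzx, hzy]
    by_cases hz : z ∈ γ.1
    · rw [Set.indicator_of_mem (hmem.mpr hz), Set.indicator_of_mem hz]
    · rw [Set.indicator_of_notMem (fun h => hz (hmem.mp h)), Set.indicator_of_notMem hz]

/-- Under condition (K1), for all cylinder functions `F, G ∈ FC_b` the Kawasaki form
integral is absolutely convergent. -/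
theorem kawasaki_form_absolutely_convergent {X : Type*} [TopologicalSpace X]
    [LocallyCompactSpace X] [SecondCountableTopology X] [T2Space X]
    [MeasurableSpace X] [BorelSpace X]
    (ν : Measure X) [ν.Regular] [NullSingletonClass ν]
    (μ : Measure (Config X)) [IsProbabilityMeasure μ]
    (c : X → X → Config X → ℝ) (hc0 : ∀ x y γ, 0 ≤ c x y γ)
    (hcm : Measurable fun p : X × X × Config X => c p.1 p.2.1 p.2.2)
    (hK1 : CondK1 ν μ c)
    (F G : Config X → ℝ) (hF : IsCylinder F) (hG : IsCylinder G) :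
    ∫⁻ γ, ∑' x : γ.1, ∫⁻ y,
        ENNReal.ofReal (c (x : X) y (γ.erase (x : X)) *
          |Dpm F (x : X) y γ| * |Dpm G (x : X) y γ|) ∂ν ∂μ < ⊤ := by
  obtain ⟨NF, φF, gF, hφFc, hφFs, hgFc, ⟨CF, hCF⟩, hFrep⟩ := hF
  obtain ⟨NG, φG, gG, hφGc, hφGs, hgGc, ⟨CG, hCG⟩, hGrep⟩ := hG
  set Λ : Set X := (⋃ i, tsupport (φF i)) ∪ (⋃ i, tsupport (φG i)) with hΛdef
  have hΛclosed : IsClosed Λ :=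
    ((isClosed_iUnion_of_finite fun i => isClosed_tsupport _).union
      (isClosed_iUnion_of_finite fun i => isClosed_tsupport _))
  have hΛB0 : IsB0 Λ := by
    refine ⟨hΛclosed.measurableSet, ?_⟩
    rw [hΛclosed.closure_eq]
    exact (isCompact_iUnion fun i => hφFs i).union (isCompact_iUnion fun i => hφGs i)
  -- nonnegativity of the bounds
  have hCF0 : 0 ≤ CF := le_trans (abs_nonneg _) (hCF 0)
  have hCG0 : 0 ≤ CG := le_trans (abs_nonneg _) (hCG 0)
  -- vanishing of phi's outside Λ
  have hφFz : ∀ (z : X), z ∉ Λ → ∀ i, φF i z = 0 := by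
    intro z hz i
    exact image_eq_zero_of_notMem_tsupport fun h =>
      hz (Or.inl (Set.mem_iUnion.mpr ⟨i, h⟩))
  have hφGz : ∀ (z : X), z ∉ Λ → ∀ i, φG i z = 0 := by
    intro z hz i
    exact image_eq_zero_of_notMem_tsupport fun h =>
      hz (Or.inr (Set.mem_iUnion.mpr ⟨i, h⟩))
  -- uniform bounds on Dpm
  have hDF : ∀ x y γ, |Dpm F x y γ| ≤ 2 * CF := by
    intro x y γ
    unfold Dpm
    calc |F ((γ.erase x).ins y) - F γ| ≤ |F ((γ.erase x).ins y)| + |F γ| := abs_sub _ _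
      _ ≤ CF + CF := by rw [hFrep, hFrep]; exact add_le_add (hCF _) (hCF _)
      _ = 2 * CF := by ring
  have hDG : ∀ x y γ, |Dpm G x y γ| ≤ 2 * CG := by
    intro x y γ
    unfold Dpm
    calc |G ((γ.erase x).ins y) - G γ| ≤ |G ((γ.erase x).ins y)| + |G γ| := abs_sub _ _
      _ ≤ CG + CG := by rw [hGrep, hGrep]; exact add_le_add (hCG _) (hCG _)
      _ = 2 * CG := by ring
  set K : ℝ≥0∞ := ENNReal.ofReal (2 * CF * (2 * CG)) with hKdef
  -- the pointwise estimate
  have est : ∀ (γ : Config X) (x y : X),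
      ENNReal.ofReal (c x y (γ.erase x) * |Dpm F x y γ| * |Dpm G x y γ|) ≤
        K * (ENNReal.ofReal (c x y (γ.erase x)) *
          (Λ.indicator (1 : X → ℝ≥0∞) x + Λ.indicator (1 : X → ℝ≥0∞) y)) := by
    intro γ x y
    by_cases hxy : x ∈ Λ ∨ y ∈ Λ
    · have hind : (1 : ℝ≥0∞) ≤ Λ.indicator (1 : X → ℝ≥0∞) x + Λ.indicator (1 : X → ℝ≥0∞) y := by
        rcases hxy with hx | hy
        · calc (1 : ℝ≥0∞) = Λ.indicator 1 x := by simp [Set.indicator_of_mem hx]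
            _ ≤ _ := le_self_add
        · calc (1 : ℝ≥0∞) = Λ.indicator 1 y := by simp [Set.indicator_of_mem hy]
            _ ≤ _ := le_add_self
      calc ENNReal.ofReal (c x y (γ.erase x) * |Dpm F x y γ| * |Dpm G x y γ|)
          ≤ ENNReal.ofReal (2 * CF * (2 * CG) * c x y (γ.erase x)) := by
            apply ENNReal.ofReal_le_ofReal
            calc c x y (γ.erase x) * |Dpm F x y γ| * |Dpm G x y γ|
                ≤ c x y (γ.erase x) * (2 * CF) * (2 * CG) :=
                  mul_le_mul (mul_le_mul_of_nonneg_left (hDF _ _ _) (hc0 _ _ _))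
                    (hDG _ _ _) (abs_nonneg _)
                    (mul_nonneg (hc0 _ _ _) (by positivity))
              _ = 2 * CF * (2 * CG) * c x y (γ.erase x) := by ring
        _ = K * ENNReal.ofReal (c x y (γ.erase x)) := by
            rw [hKdef, ← ENNReal.ofReal_mul (by positivity)]
        _ ≤ K * (ENNReal.ofReal (c x y (γ.erase x)) *
            (Λ.indicator (1 : X → ℝ≥0∞) x + Λ.indicator (1 : X → ℝ≥0∞) y)) := by
            exact mul_le_mul_right (le_mul_of_one_le_right zero_le' hind) K
    · push_neg at hxy
      have hF0 : Dpm F x y γ = 0 :=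
        Dpm_eq_zero_of_rep hFrep (hφFz x hxy.1) (hφFz y hxy.2) γ
      simp [hF0]
  -- assembly
  calc ∫⁻ γ, ∑' x : γ.1, ∫⁻ y,
        ENNReal.ofReal (c (x : X) y (γ.erase (x : X)) *
          |Dpm F (x : X) y γ| * |Dpm G (x : X) y γ|) ∂ν ∂μ
      ≤ ∫⁻ γ, ∑' x : γ.1, ∫⁻ y, K * (ENNReal.ofReal (c (x : X) y (γ.erase (x : X))) *
          (Λ.indicator (1 : X → ℝ≥0∞) (x : X) + Λ.indicator (1 : X → ℝ≥0∞) y)) ∂ν ∂μ := by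
        refine lintegral_mono fun γ => ENNReal.tsum_le_tsum fun x => lintegral_mono fun y => ?_
        exact est γ x y
    _ = K * ∫⁻ γ, ∑' x : γ.1, ∫⁻ y, ENNReal.ofReal (c (x : X) y (γ.erase (x : X))) *
          (Λ.indicator (1 : X → ℝ≥0∞) (x : X) + Λ.indicator (1 : X → ℝ≥0∞) y) ∂ν ∂μ := by
        simp_rw [lintegral_const_mul' K _ ENNReal.ofReal_ne_top, ENNReal.tsum_mul_left]
        exact lintegral_const_mul' K _ ENNReal.ofReal_ne_top
    _ < ⊤ := ENNReal.mul_lt_top ENNReal.ofReal_lt_top (hK1 Λ hΛB0)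

end
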